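/- Let M₁ and M₂ be suitable structures in the vocabulary {E_n : n < ω}, and for ℓ = 1,2 let (𝒯_ℓ, ⟨a^ℓ_η : η ∈ 𝒯_ℓ⟩) be a representation of M_ℓ. Then M₁ and M₂ are isomorphic if and only if there is a tree isomorphism h : 𝒯₁ → 𝒯₂ (a bijection preserving lengths of sequences and preserving the initial-segment relation and its negation) such that for every ω-branch η of 𝒯₁, μ¹_η = μ²_{h_ω(η)}, where h_ω(η) is the ω-branch of 𝒯₂ whose restriction to n equals h(η↾n) for all n, and μ^ℓ denotes the branch multiplicity function of M_ℓ. -/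
import Mathlib


open Cardinal

namespace SuitableStructures

/-- A suitable structure in the vocabulary `{E_n : n < ω}`:  each `E_n` is an equivalence
relation, `E_0` is total, and `E_{n+1}` refines `E_n`. -/
structure SuitStruct : Type 1 where
  carrier : Type
  E : ℕ → carrier → carrier → Prop
  equiv : ∀ n, Equivalence (E n)
  total0 : ∀ x y, E 0 x y
  refines : ∀ n x y, E (n + 1) x y → E n x y

/-- The sequence `⟨η(0), …, η(n-1)⟩` as a list. -/
def take (n : ℕ) (η : ℕ → Ordinal.{0}) : List Ordinal.{0} := List.ofFn fun i : Fin n => η i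

/-- A representation `(𝒯, ⟨a_η : η ∈ 𝒯⟩)` of a suitable structure `M`:  `𝒯` is a tree of
finite sequences of ordinals, and for each node `η` of length `n` the `E_{n+1}`-classes of
the values at the immediate successors of `η` enumerate, without repetition, exactly the
`E_{n+1}`-classes included in `a_η / E_n`. -/
structure Repres (M : SuitStruct) : Type 1 where
  tree : Set (List Ordinal.{0})
  node : List Ordinal.{0} → M.carrier
  nil_mem : [] ∈ tree
  prefix_closed : ∀ l ∈ tree, ∀ l' : List Ordinal.{0}, l' <+: l → l' ∈ tree
  succ_rel : ∀ l ∈ tree, ∀ x : Ordinal.{0}, l ++ [x] ∈ tree →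
    M.E l.length (node (l ++ [x])) (node l)
  succ_inj : ∀ l ∈ tree, ∀ x y : Ordinal.{0}, l ++ [x] ∈ tree → l ++ [y] ∈ tree → x ≠ y →
    ¬ M.E (l.length + 1) (node (l ++ [x])) (node (l ++ [y]))
  succ_surj : ∀ l ∈ tree, ∀ b : M.carrier, M.E l.length b (node l) →
    ∃ x : Ordinal.{0}, l ++ [x] ∈ tree ∧ M.E (l.length + 1) b (node (l ++ [x]))

/-- The branch multiplicity `μ_η` of an `ω`-branch `η` of the tree of a representation:
the number of elements lying in all the classes `a_{η↾n}/E_n`. -/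
noncomputable def branchMult {M : SuitStruct} (R : Repres M) (η : ℕ → Ordinal.{0}) : Cardinal :=
  #{b : M.carrier // ∀ n, M.E n b (R.node (take n η))}


-- basic E lemmas
lemma E_refl (M : SuitStruct) (n : ℕ) (x : M.carrier) : M.E n x x := (M.equiv n).refl x
lemma E_symm (M : SuitStruct) {n : ℕ} {x y : M.carrier} (h : M.E n x y) : M.E n y x :=
  (M.equiv n).symm h
lemma E_trans (M : SuitStruct) {n : ℕ} {x y z : M.carrier} (h : M.E n x y) (h' : M.E n y z) :
    M.E n x z := (M.equiv n).trans h h'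

lemma E_mono (M : SuitStruct) {k m : ℕ} (h : k ≤ m) {x y : M.carrier} (hE : M.E m x y) :
    M.E k x y := by
  induction h with
  | refl => exact hE
  | step _ ih => exact ih (M.refines _ _ _ hE)

-- take lemmas
@[simp] lemma take_zero (η : ℕ → Ordinal.{0}) : take 0 η = [] := rfl

@[simp] lemma take_length (n : ℕ) (η : ℕ → Ordinal.{0}) : (take n η).length = n := by
  simp [take]

lemma take_succ (n : ℕ) (η : ℕ → Ordinal.{0}) : take (n + 1) η = take n η ++ [η n] := by
  rw [take, take, List.ofFn_succ']
  simp [List.concat_eq_append]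

lemma take_take {n m : ℕ} (h : n ≤ m) (η : ℕ → Ordinal.{0}) :
    (take m η).take n = take n η := by
  induction m with
  | zero => simp_all
  | succ m ih =>
    rcases Nat.lt_or_ge n (m+1) with hn | hn
    · rw [take_succ, List.take_append_of_le_length (by simpa using Nat.lt_succ_iff.mp hn),
        ih (Nat.lt_succ_iff.mp hn)]
    · have : n = m + 1 := le_antisymm h hn
      subst this
      exact List.take_of_length_le (by simp)

lemma take_prefix_take {n m : ℕ} (h : n ≤ m) (η : ℕ → Ordinal.{0}) :
    take n η <+: take m η := by
  rw [← take_take h η]; exact List.take_prefix _ _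

lemma take_inj {η ν : ℕ → Ordinal.{0}} (h : ∀ n, take n η = take n ν) : η = ν := by
  funext n
  have := h (n+1)
  rw [take_succ, take_succ, h n] at this
  simpa using List.append_cancel_left this

lemma exists_fun_of_chain (G : ℕ → List Ordinal.{0}) (hlen : ∀ n, (G n).length = n)
    (hpre : ∀ n, G n <+: G (n + 1)) : ∃ η : ℕ → Ordinal.{0}, ∀ n, take n η = G n := by
  have hstep : ∀ n, ∃ x, G (n + 1) = G n ++ [x] := by
    intro n
    obtain ⟨t, ht⟩ := hpre n
    have h1 : t.length = 1 := by
      have := congrArg List.length ht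
      simp [hlen] at this
      omega
    obtain ⟨x, rfl⟩ := List.length_eq_one_iff.mp h1
    exact ⟨x, ht.symm⟩
  choose f hf using hstep
  refine ⟨f, fun n => ?_⟩
  induction n with
  | zero => simpa using (List.length_eq_zero_iff.mp (hlen 0)).symm
  | succ n ih => rw [take_succ, ih, ← hf n]

section
variable {M : SuitStruct} (R : Repres M)

lemma node_inj : ∀ (n : ℕ) (l l' : List Ordinal.{0}), l ∈ R.tree → l' ∈ R.tree →
    l.length = n → l'.length = n → M.E n (R.node l) (R.node l') → l = l' := by
  intro n
  induction n with
  | zero =>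
    intro l l' _ _ h1 h2 _
    rw [List.length_eq_zero_iff] at h1 h2
    rw [h1, h2]
  | succ n ih =>
    intro l l' hl hl' h1 h2 hE
    rcases l.eq_nil_or_concat with rfl | ⟨a, x, hax⟩
    · simp at h1
    rw [List.concat_eq_append] at hax; subst hax
    rcases l'.eq_nil_or_concat with rfl | ⟨a', x', hax'⟩
    · simp at h2
    rw [List.concat_eq_append] at hax'; subst hax'
    have hla : a.length = n := by simpa using h1
    have hla' : a'.length = n := by simpa using h2
    have ha : a ∈ R.tree := R.prefix_closed _ hl a ⟨[x], rfl⟩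
    have ha' : a' ∈ R.tree := R.prefix_closed _ hl' a' ⟨[x'], rfl⟩
    have s1 : M.E n (R.node (a ++ [x])) (R.node a) := by
      have := R.succ_rel a ha x hl; rwa [hla] at this
    have s2 : M.E n (R.node (a' ++ [x'])) (R.node a') := by
      have := R.succ_rel a' ha' x' hl'; rwa [hla'] at this
    have hEn : M.E n (R.node (a ++ [x])) (R.node (a' ++ [x'])) :=
      E_mono M (Nat.le_succ n) hE
    have haa : a = a' := ih a a' ha ha' hla hla'
      (E_trans M (E_symm M s1) (E_trans M hEn s2))
    subst haa
    by_contra hne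
    have hxx : x ≠ x' := fun hc => hne (by rw [hc])
    have := R.succ_inj a ha x x' hl hl' hxx
    rw [hla] at this
    exact this hE

private noncomputable def chainAux (b : M.carrier) :
    ℕ → {l : List Ordinal.{0} // l ∈ R.tree ∧ M.E l.length b (R.node l)}
  | 0 => ⟨[], R.nil_mem, M.total0 b _⟩
  | n + 1 =>
    let p := chainAux b n
    let s := R.succ_surj p.1 p.2.1 b p.2.2
    ⟨p.1 ++ [Classical.choose s], (Classical.choose_spec s).1, by
      simpa using (Classical.choose_spec s).2⟩

private lemma chainAux_succ (b : M.carrier) (n : ℕ) :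
    ∃ x, (chainAux R b (n + 1)).1 = (chainAux R b n).1 ++ [x] := by
  simp only [chainAux]
  exact ⟨_, rfl⟩

private lemma chainAux_length (b : M.carrier) (n : ℕ) : (chainAux R b n).1.length = n := by
  induction n with
  | zero => rfl
  | succ n ih =>
    obtain ⟨x, hx⟩ := chainAux_succ R b n
    simp [hx, ih]

/-- Every element lies on a branch. -/
lemma exists_branch (b : M.carrier) :
    ∃ η : ℕ → Ordinal.{0}, (∀ n, take n η ∈ R.tree) ∧
      ∀ n, M.E n b (R.node (take n η)) := by
  obtain ⟨η, hη⟩ := exists_fun_of_chain (fun n => (chainAux R b n).1)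
    (chainAux_length R b) (fun n => by
      obtain ⟨x, hx⟩ := chainAux_succ R b n
      exact ⟨[x], hx.symm⟩)
  refine ⟨η, fun n => ?_, fun n => ?_⟩
  · rw [hη n]; exact (chainAux R b n).2.1
  · rw [hη n]
    have := (chainAux R b n).2.2
    rwa [chainAux_length R b n] at this

/-- Uniqueness of branches through a point. -/
lemma branch_unique {b : M.carrier} {η ν : ℕ → Ordinal.{0}}
    (hη : ∀ n, take n η ∈ R.tree) (hν : ∀ n, take n ν ∈ R.tree)
    (h1 : ∀ n, M.E n b (R.node (take n η))) (h2 : ∀ n, M.E n b (R.node (take n ν))) :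
    η = ν :=
  take_inj fun n => node_inj R n _ _ (hη n) (hν n) (take_length n η) (take_length n ν)
    (E_trans M (E_symm M (h1 n)) (h2 n))

/-- Characterisation of `E n` via branches. -/
lemma E_iff_take {b c : M.carrier} {η ν : ℕ → Ordinal.{0}}
    (hη : ∀ n, take n η ∈ R.tree) (hν : ∀ n, take n ν ∈ R.tree)
    (h1 : ∀ n, M.E n b (R.node (take n η))) (h2 : ∀ n, M.E n c (R.node (take n ν)))
    (n : ℕ) : M.E n b c ↔ take n η = take n ν := by
  constructor
  · intro hE
    exact node_inj R n _ _ (hη n) (hν n) (take_length n η) (take_length n ν)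
      (E_trans M (E_symm M (h1 n)) (E_trans M hE (h2 n)))
  · intro ht
    refine E_trans M (h1 n) ?_
    rw [ht]
    exact E_symm M (h2 n)

end


section Forward
variable {M₁ M₂ : SuitStruct} (R₁ : Repres M₁) (R₂ : Repres M₂)
  (e : M₁.carrier ≃ M₂.carrier)

private noncomputable def stepAux (l : List Ordinal.{0}) (x : Ordinal.{0})
    (Hl : List Ordinal.{0}) : List Ordinal.{0} :=
  @dite _ (Hl ∈ R₂.tree ∧ M₂.E Hl.length (e (R₁.node (l ++ [x]))) (R₂.node Hl))
    (Classical.dec _)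
    (fun hc => Hl ++ [Classical.choose (R₂.succ_surj Hl hc.1 _ hc.2)]) (fun _ => [])

private noncomputable def goAux : List Ordinal.{0} → List Ordinal.{0}
  | [] => []
  | x :: r => stepAux R₁ R₂ e r.reverse x (goAux r)

private noncomputable def mapAux (l : List Ordinal.{0}) : List Ordinal.{0} :=
  goAux R₁ R₂ e l.reverse

private lemma mapAux_nil : mapAux R₁ R₂ e [] = [] := rfl

private lemma mapAux_concat (l : List Ordinal.{0}) (x : Ordinal.{0}) :
    mapAux R₁ R₂ e (l ++ [x]) = stepAux R₁ R₂ e l x (mapAux R₁ R₂ e l) := by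
  have hrev : (l ++ [x]).reverse = x :: l.reverse := by simp
  unfold mapAux
  rw [hrev]
  simp only [goAux, List.reverse_reverse]

variable (he : ∀ n x y, M₁.E n x y ↔ M₂.E n (e x) (e y))
include he

private lemma mapAux_spec : ∀ l ∈ R₁.tree,
    mapAux R₁ R₂ e l ∈ R₂.tree ∧ (mapAux R₁ R₂ e l).length = l.length ∧
      M₂.E l.length (e (R₁.node l)) (R₂.node (mapAux R₁ R₂ e l)) := by
  intro l
  induction l using List.reverseRecOn with
  | nil =>
    intro _
    exact ⟨by rw [mapAux_nil]; exact R₂.nil_mem, by rw [mapAux_nil], M₂.total0 _ _⟩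
  | append_singleton l x ih =>
    intro hlx
    have hl : l ∈ R₁.tree := R₁.prefix_closed _ hlx l ⟨[x], rfl⟩
    obtain ⟨m1, m2, m3⟩ := ih hl
    have hc : mapAux R₁ R₂ e l ∈ R₂.tree ∧
        M₂.E (mapAux R₁ R₂ e l).length (e (R₁.node (l ++ [x])))
          (R₂.node (mapAux R₁ R₂ e l)) := by
      refine ⟨m1, ?_⟩
      rw [m2]
      exact E_trans M₂ ((he _ _ _).mp (R₁.succ_rel l hl x hlx)) m3
    rw [mapAux_concat, stepAux, dif_pos hc]
    have spec := Classical.choose_spec (R₂.succ_surj _ hc.1 _ hc.2)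
    refine ⟨spec.1, by simp [m2], ?_⟩
    have hlen2 : (l ++ [x]).length = (mapAux R₁ R₂ e l).length + 1 := by simp [m2]
    rw [hlen2]
    exact spec.2

private lemma mapAux_shape (l : List Ordinal.{0}) (x : Ordinal.{0}) (hlx : l ++ [x] ∈ R₁.tree) :
    ∃ y, mapAux R₁ R₂ e (l ++ [x]) = mapAux R₁ R₂ e l ++ [y] := by
  have hl : l ∈ R₁.tree := R₁.prefix_closed _ hlx l ⟨[x], rfl⟩
  obtain ⟨m1, m2, m3⟩ := mapAux_spec R₁ R₂ e he l hl
  have hc : mapAux R₁ R₂ e l ∈ R₂.tree ∧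
      M₂.E (mapAux R₁ R₂ e l).length (e (R₁.node (l ++ [x])))
        (R₂.node (mapAux R₁ R₂ e l)) := by
    refine ⟨m1, ?_⟩
    rw [m2]
    exact E_trans M₂ ((he _ _ _).mp (R₁.succ_rel l hl x hlx)) m3
  rw [mapAux_concat, stepAux, dif_pos hc]
  exact ⟨_, rfl⟩

private lemma mapAux_take : ∀ l ∈ R₁.tree, ∀ k, k ≤ l.length →
    mapAux R₁ R₂ e (l.take k) = (mapAux R₁ R₂ e l).take k := by
  intro l
  induction l using List.reverseRecOn with
  | nil =>
    intro _ k hk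
    simp only [List.length_nil, Nat.le_zero] at hk
    subst hk
    simp [mapAux_nil]
  | append_singleton l x ih =>
    intro hlx k hk
    have hl : l ∈ R₁.tree := R₁.prefix_closed _ hlx l ⟨[x], rfl⟩
    obtain ⟨m1, m2, m3⟩ := mapAux_spec R₁ R₂ e he l hl
    obtain ⟨m1', m2', m3'⟩ := mapAux_spec R₁ R₂ e he (l ++ [x]) hlx
    rcases Nat.lt_or_ge k (l.length + 1) with hk' | hk'
    · have hk'' : k ≤ l.length := Nat.lt_succ_iff.mp hk'
      obtain ⟨y, hy⟩ := mapAux_shape R₁ R₂ e he l x hlx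
      rw [List.take_append_of_le_length hk'', ih hl k hk'', hy,
        List.take_append_of_le_length (by rw [m2]; exact hk'')]
    · have hk3 : k = l.length + 1 := le_antisymm (by simpa using hk) hk'
      subst hk3
      rw [List.take_of_length_le (by simp), List.take_of_length_le (by simp [m2'])]

private lemma mapAux_inj : ∀ l ∈ R₁.tree, ∀ l' ∈ R₁.tree,
    mapAux R₁ R₂ e l = mapAux R₁ R₂ e l' → l = l' := by
  intro l hl l' hl' heq
  obtain ⟨m1, m2, m3⟩ := mapAux_spec R₁ R₂ e he l hl
  obtain ⟨m1', m2', m3'⟩ := mapAux_spec R₁ R₂ e he l' hl'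
  have hlen : l.length = l'.length := by rw [← m2, ← m2', heq]
  have h3' : M₂.E l.length (e (R₁.node l')) (R₂.node (mapAux R₁ R₂ e l)) := by
    rw [heq, hlen]; exact m3'
  have hE2 : M₂.E l.length (e (R₁.node l)) (e (R₁.node l')) :=
    E_trans M₂ m3 (E_symm M₂ h3')
  exact node_inj R₁ l.length l l' hl hl' rfl hlen.symm ((he _ _ _).mpr hE2)

private lemma mapAux_surj : ∀ m ∈ R₂.tree, ∃ l ∈ R₁.tree, mapAux R₁ R₂ e l = m := by
  intro m
  induction m using List.reverseRecOn with
  | nil => intro _; exact ⟨[], R₁.nil_mem, mapAux_nil R₁ R₂ e⟩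
  | append_singleton m y ih =>
    intro hmy
    have hm : m ∈ R₂.tree := R₂.prefix_closed _ hmy m ⟨[y], rfl⟩
    obtain ⟨l, hl, hHl⟩ := ih hm
    obtain ⟨m1, m2, m3⟩ := mapAux_spec R₁ R₂ e he l hl
    have hmlen : m.length = l.length := by rw [← hHl, m2]
    have hrel2 : M₂.E l.length (R₂.node (m ++ [y])) (e (R₁.node l)) := by
      have h1 := R₂.succ_rel m hm y hmy
      rw [hmlen] at h1
      rw [hHl] at m3
      exact E_trans M₂ h1 (E_symm M₂ m3)
    have hrel1 : M₁.E l.length (e.symm (R₂.node (m ++ [y]))) (R₁.node l) := by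
      rw [he l.length (e.symm (R₂.node (m ++ [y]))) (R₁.node l), Equiv.apply_symm_apply]
      exact hrel2
    obtain ⟨x, hx1, hx2⟩ := R₁.succ_surj l hl _ hrel1
    obtain ⟨y', hy'⟩ := mapAux_shape R₁ R₂ e he l x hx1
    obtain ⟨m1', m2', m3'⟩ := mapAux_spec R₁ R₂ e he (l ++ [x]) hx1
    rw [hy', hHl] at m3' m1'
    have hEy' : M₂.E (l.length + 1) (e (R₁.node (l ++ [x]))) (R₂.node (m ++ [y'])) := by
      have := m3'
      simpa using this
    have hEy : M₂.E (l.length + 1) (R₂.node (m ++ [y])) (e (R₁.node (l ++ [x]))) := by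
      have := (he (l.length + 1) _ _).mp hx2
      rwa [Equiv.apply_symm_apply] at this
    have hyy : y = y' := by
      by_contra hne
      have := R₂.succ_inj m hm y y' hmy m1' hne
      rw [hmlen] at this
      exact this (E_trans M₂ hEy hEy')
    refine ⟨l ++ [x], hx1, ?_⟩
    rw [hy', hHl, hyy]

/-- The forward direction of the main theorem. -/
private lemma forward_dir :
    ∃ h : {l // l ∈ R₁.tree} ≃ {l // l ∈ R₂.tree},
      (∀ l : {l // l ∈ R₁.tree}, (h l : List Ordinal.{0}).length = (l : List Ordinal.{0}).length) ∧
      (∀ l l' : {l // l ∈ R₁.tree},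
        ((l : List Ordinal.{0}) <+: (l' : List Ordinal.{0})) ↔
          ((h l : List Ordinal.{0}) <+: (h l' : List Ordinal.{0}))) ∧
      ∀ (η : ℕ → Ordinal.{0}) (hη : ∀ n, take n η ∈ R₁.tree)
        (ν : ℕ → Ordinal.{0}) (hν : ∀ n, take n ν ∈ R₂.tree),
        (∀ n, (h ⟨take n η, hη n⟩ : List Ordinal.{0}) = take n ν) →
        branchMult R₁ η = branchMult R₂ ν := by
  classical
  set f : {l // l ∈ R₁.tree} → {l // l ∈ R₂.tree} :=
    fun l => ⟨mapAux R₁ R₂ e l.1, (mapAux_spec R₁ R₂ e he l.1 l.2).1⟩ with hf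
  have hbij : Function.Bijective f := by
    constructor
    · intro l l' hll
      exact Subtype.ext (mapAux_inj R₁ R₂ e he l.1 l.2 l'.1 l'.2 (congrArg Subtype.val hll))
    · intro m
      obtain ⟨l, hl, hlm⟩ := mapAux_surj R₁ R₂ e he m.1 m.2
      exact ⟨⟨l, hl⟩, Subtype.ext hlm⟩
  have hcoe : ∀ l : {l // l ∈ R₁.tree},
      ((Equiv.ofBijective f hbij) l : List Ordinal.{0}) = mapAux R₁ R₂ e l.1 := fun _ => rfl
  refine ⟨Equiv.ofBijective f hbij, fun l => (mapAux_spec R₁ R₂ e he l.1 l.2).2.1,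
    fun l l' => ?_, fun η hη ν hν hmatch => ?_⟩
  · rw [hcoe l, hcoe l']
    constructor
    · intro hp
      have h1 : (l : List Ordinal.{0}) = (l' : List Ordinal.{0}).take (l : List Ordinal.{0}).length :=
        List.prefix_iff_eq_take.mp hp
      have h2 := mapAux_take R₁ R₂ e he l'.1 l'.2 l.1.length hp.length_le
      show mapAux R₁ R₂ e l.1 <+: mapAux R₁ R₂ e l'.1
      conv_lhs => rw [h1]
      rw [h2]
      exact List.take_prefix _ _
    · intro hp
      have hlen1 := (mapAux_spec R₁ R₂ e he l.1 l.2).2.1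
      have hlen2 := (mapAux_spec R₁ R₂ e he l'.1 l'.2).2.1
      have hk : l.1.length ≤ l'.1.length := by
        have := hp.length_le
        rwa [hlen1, hlen2] at this
      have h3 : mapAux R₁ R₂ e (l'.1.take l.1.length) = mapAux R₁ R₂ e l.1 := by
        rw [mapAux_take R₁ R₂ e he l'.1 l'.2 l.1.length hk]
        have := List.prefix_iff_eq_take.mp hp
        rw [hlen1] at this
        exact this.symm
      have htk : l'.1.take l.1.length ∈ R₁.tree :=
        R₁.prefix_closed _ l'.2 _ (List.take_prefix _ _)
      have := mapAux_inj R₁ R₂ e he _ htk l.1 l.2 h3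
      rw [← this]
      exact List.take_prefix _ _
  · have hmatch' : ∀ n, mapAux R₁ R₂ e (take n η) = take n ν := fun n => by
      rw [← hcoe ⟨take n η, hη n⟩]; exact hmatch n
    refine Cardinal.mk_congr (Equiv.subtypeEquiv e fun b => forall_congr' fun n => ?_)
    have hns := (mapAux_spec R₁ R₂ e he (take n η) (hη n)).2.2
    rw [take_length, hmatch' n] at hns
    constructor
    · intro hb
      exact E_trans M₂ ((he n _ _).mp hb) hns
    · intro hb
      exact (he n _ _).mpr (E_trans M₂ hb (E_symm M₂ hns))

end Forward

section Backward
variable {M₁ M₂ : SuitStruct} (R₁ : Repres M₁) (R₂ : Repres M₂)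

private lemma lift_branch (g : {l // l ∈ R₁.tree} → {l // l ∈ R₂.tree})
    (glen : ∀ l, (g l : List Ordinal.{0}).length = (l : List Ordinal.{0}).length)
    (gpre : ∀ l l' : {l // l ∈ R₁.tree}, ((l : List Ordinal.{0}) <+: (l' : List Ordinal.{0})) →
      ((g l : List Ordinal.{0}) <+: (g l' : List Ordinal.{0})))
    (η : ℕ → Ordinal.{0}) (hη : ∀ n, take n η ∈ R₁.tree) :
    ∃ ν : ℕ → Ordinal.{0}, (∀ n, take n ν ∈ R₂.tree) ∧
      ∀ n (p : take n η ∈ R₁.tree), (g ⟨take n η, p⟩ : List Ordinal.{0}) = take n ν := by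
  obtain ⟨ν, hν⟩ := exists_fun_of_chain (fun n => (g ⟨take n η, hη n⟩ : List Ordinal.{0}))
    (fun n => by rw [glen]; exact take_length n η)
    (fun n => gpre _ _ (take_prefix_take (Nat.le_succ n) η))
  refine ⟨ν, fun n => ?_, fun n p => ?_⟩
  · rw [hν n]; exact (g ⟨take n η, hη n⟩).2
  · rw [hν n]

private lemma backward_dir (h : {l // l ∈ R₁.tree} ≃ {l // l ∈ R₂.tree})
    (hlen : ∀ l : {l // l ∈ R₁.tree},
      (h l : List Ordinal.{0}).length = (l : List Ordinal.{0}).length)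
    (hpre : ∀ l l' : {l // l ∈ R₁.tree},
      ((l : List Ordinal.{0}) <+: (l' : List Ordinal.{0})) ↔
        ((h l : List Ordinal.{0}) <+: (h l' : List Ordinal.{0})))
    (hmult : ∀ (η : ℕ → Ordinal.{0}) (hη : ∀ n, take n η ∈ R₁.tree)
      (ν : ℕ → Ordinal.{0}) (hν : ∀ n, take n ν ∈ R₂.tree),
      (∀ n, (h ⟨take n η, hη n⟩ : List Ordinal.{0}) = take n ν) →
      branchMult R₁ η = branchMult R₂ ν) :
    ∃ e : M₁.carrier ≃ M₂.carrier, ∀ n x y, M₁.E n x y ↔ M₂.E n (e x) (e y) := by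
  classical
  choose br₁ hbr₁t hbr₁E using fun b => exists_branch R₁ b
  choose br₂ hbr₂t hbr₂E using fun c => exists_branch R₂ c
  have hlen' : ∀ m : {l // l ∈ R₂.tree},
      (h.symm m : List Ordinal.{0}).length = (m : List Ordinal.{0}).length := by
    intro m
    have := hlen (h.symm m)
    rw [Equiv.apply_symm_apply] at this
    exact this.symm
  have hpre' : ∀ m m' : {l // l ∈ R₂.tree},
      ((m : List Ordinal.{0}) <+: (m' : List Ordinal.{0})) ↔
        ((h.symm m : List Ordinal.{0}) <+: (h.symm m' : List Ordinal.{0})) := by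
    intro m m'
    have := hpre (h.symm m) (h.symm m')
    rw [Equiv.apply_symm_apply, Equiv.apply_symm_apply] at this
    exact this.symm
  choose Φ hΦt hΦeq using fun (η : {η : ℕ → Ordinal.{0} // ∀ n, take n η ∈ R₁.tree}) =>
    lift_branch R₁ R₂ h hlen (fun l l' hp => (hpre l l').mp hp) η.1 η.2
  choose Ψ hΨt hΨeq using fun (ν : {ν : ℕ → Ordinal.{0} // ∀ n, take n ν ∈ R₂.tree}) =>
    lift_branch R₂ R₁ h.symm hlen' (fun m m' hp => (hpre' m m').mp hp) ν.1 ν.2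
  have hΨΦ : ∀ η : {η : ℕ → Ordinal.{0} // ∀ n, take n η ∈ R₁.tree},
      Ψ ⟨Φ η, hΦt η⟩ = η.1 := by
    intro η
    apply take_inj
    intro n
    have h2 := hΨeq ⟨Φ η, hΦt η⟩ n (hΦt η n)
    rw [← h2]
    have h3 : (⟨take n (Φ η), hΦt η n⟩ : {l // l ∈ R₂.tree}) = h ⟨take n η.1, η.2 n⟩ :=
      Subtype.ext (hΦeq η n (η.2 n)).symm
    rw [h3, Equiv.symm_apply_apply]
  have hΦΨ : ∀ ν : {ν : ℕ → Ordinal.{0} // ∀ n, take n ν ∈ R₂.tree},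
      Φ ⟨Ψ ν, hΨt ν⟩ = ν.1 := by
    intro ν
    apply take_inj
    intro n
    have h2 := hΦeq ⟨Ψ ν, hΨt ν⟩ n (hΨt ν n)
    rw [← h2]
    have h3 : (⟨take n (Ψ ν), hΨt ν n⟩ : {l // l ∈ R₁.tree}) = h.symm ⟨take n ν.1, ν.2 n⟩ :=
      Subtype.ext (hΨeq ν n (ν.2 n)).symm
    rw [h3, Equiv.apply_symm_apply]
  have hmul : ∀ η : {η : ℕ → Ordinal.{0} // ∀ n, take n η ∈ R₁.tree},
      branchMult R₁ η.1 = branchMult R₂ (Φ η) :=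
    fun η => hmult η.1 η.2 (Φ η) (hΦt η) (fun n => hΦeq η n (η.2 n))
  have q : ∀ η : {η : ℕ → Ordinal.{0} // ∀ n, take n η ∈ R₁.tree},
      {b : M₁.carrier // ∀ n, M₁.E n b (R₁.node (take n η.1))} ≃
        {c : M₂.carrier // ∀ n, M₂.E n c (R₂.node (take n (Φ η)))} :=
    fun η => Classical.choice (Cardinal.eq.mp (hmul η))
  have qcongr : ∀ η η' : {η : ℕ → Ordinal.{0} // ∀ n, take n η ∈ R₁.tree}, η = η' →
      ∀ (b : M₁.carrier) (p : ∀ n, M₁.E n b (R₁.node (take n η.1)))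
        (p' : ∀ n, M₁.E n b (R₁.node (take n η'.1))),
      ((q η) ⟨b, p⟩).1 = ((q η') ⟨b, p'⟩).1 := by
    rintro η η' rfl b p p'
    rfl
  set eF : M₁.carrier → M₂.carrier :=
    fun b => ((q ⟨br₁ b, hbr₁t b⟩) ⟨b, hbr₁E b⟩).1 with heF
  have eF_eq : ∀ (η : {η : ℕ → Ordinal.{0} // ∀ n, take n η ∈ R₁.tree}) (b : M₁.carrier)
      (p : ∀ n, M₁.E n b (R₁.node (take n η.1))), eF b = ((q η) ⟨b, p⟩).1 := by
    intro η b p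
    have hbr : (⟨br₁ b, hbr₁t b⟩ : {η : ℕ → Ordinal.{0} // ∀ n, take n η ∈ R₁.tree}) = η :=
      Subtype.ext (branch_unique R₁ (hbr₁t b) η.2 (hbr₁E b) p)
    exact qcongr _ _ hbr b _ p
  have eF_mem : ∀ b n, M₂.E n (eF b) (R₂.node (take n (Φ ⟨br₁ b, hbr₁t b⟩))) :=
    fun b => ((q ⟨br₁ b, hbr₁t b⟩) ⟨b, hbr₁E b⟩).2
  have hinj : Function.Injective eF := by
    intro b c hbc
    have hb := eF_mem b
    have hc := eF_mem c
    rw [hbc] at hb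
    have hΦeqn : Φ ⟨br₁ b, hbr₁t b⟩ = Φ ⟨br₁ c, hbr₁t c⟩ :=
      branch_unique R₂ (hΦt _) (hΦt _) hb hc
    have hη : (⟨br₁ b, hbr₁t b⟩ : {η : ℕ → Ordinal.{0} // ∀ n, take n η ∈ R₁.tree}) =
        ⟨br₁ c, hbr₁t c⟩ := by
      have h1 := hΨΦ ⟨br₁ b, hbr₁t b⟩
      have h2 := hΨΦ ⟨br₁ c, hbr₁t c⟩
      have h3 : (⟨Φ ⟨br₁ b, hbr₁t b⟩, hΦt _⟩ :
          {ν : ℕ → Ordinal.{0} // ∀ n, take n ν ∈ R₂.tree}) = ⟨Φ ⟨br₁ c, hbr₁t c⟩, hΦt _⟩ :=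
        Subtype.ext hΦeqn
      apply Subtype.ext
      rw [← h1, ← h2, h3]
    have pc : ∀ n, M₁.E n c (R₁.node (take n (br₁ b))) := by
      have hval : br₁ b = br₁ c := congrArg Subtype.val hη
      rw [hval]
      exact hbr₁E c
    have hc' := eF_eq ⟨br₁ b, hbr₁t b⟩ c pc
    rw [hc'] at hbc
    have : (⟨b, hbr₁E b⟩ : {d : M₁.carrier //
        ∀ n, M₁.E n d (R₁.node (take n (br₁ b)))}) = ⟨c, pc⟩ :=
      (q ⟨br₁ b, hbr₁t b⟩).injective (Subtype.ext hbc)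
    exact congrArg Subtype.val this
  have hsurj : Function.Surjective eF := by
    intro c
    have hΦη : Φ ⟨Ψ ⟨br₂ c, hbr₂t c⟩, hΨt ⟨br₂ c, hbr₂t c⟩⟩ = br₂ c := hΦΨ ⟨br₂ c, hbr₂t c⟩
    have pc : ∀ n, M₂.E n c
        (R₂.node (take n (Φ ⟨Ψ ⟨br₂ c, hbr₂t c⟩, hΨt ⟨br₂ c, hbr₂t c⟩⟩))) := by
      rw [hΦη]
      exact hbr₂E c
    refine ⟨((q ⟨Ψ ⟨br₂ c, hbr₂t c⟩, hΨt ⟨br₂ c, hbr₂t c⟩⟩).symm ⟨c, pc⟩).1, ?_⟩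
    rw [eF_eq ⟨Ψ ⟨br₂ c, hbr₂t c⟩, hΨt ⟨br₂ c, hbr₂t c⟩⟩ _
      ((q ⟨Ψ ⟨br₂ c, hbr₂t c⟩, hΨt ⟨br₂ c, hbr₂t c⟩⟩).symm ⟨c, pc⟩).2]
    exact congrArg Subtype.val (Equiv.apply_symm_apply _ _)
  refine ⟨Equiv.ofBijective eF ⟨hinj, hsurj⟩, fun n b c => ?_⟩
  show M₁.E n b c ↔ M₂.E n (eF b) (eF c)
  have key₁ : M₁.E n b c ↔ take n (br₁ b) = take n (br₁ c) :=
    E_iff_take R₁ (hbr₁t b) (hbr₁t c) (hbr₁E b) (hbr₁E c) n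
  have key₂ : M₂.E n (eF b) (eF c) ↔
      take n (Φ ⟨br₁ b, hbr₁t b⟩) = take n (Φ ⟨br₁ c, hbr₁t c⟩) :=
    E_iff_take R₂ (hΦt _) (hΦt _) (eF_mem b) (eF_mem c) n
  rw [key₁, key₂]
  constructor
  · intro ht
    rw [← hΦeq ⟨br₁ b, hbr₁t b⟩ n (hbr₁t b n), ← hΦeq ⟨br₁ c, hbr₁t c⟩ n (hbr₁t c n)]
    exact congrArg (fun z => (h z : List Ordinal.{0})) (Subtype.ext ht)
  · intro ht
    rw [← hΦeq ⟨br₁ b, hbr₁t b⟩ n (hbr₁t b n), ← hΦeq ⟨br₁ c, hbr₁t c⟩ n (hbr₁t c n)] at ht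
    have := h.injective (Subtype.ext ht)
    exact congrArg Subtype.val this

end Backward

/-- `⊛` of Step C in the proof of Claim 1a.11.  Two suitable structures
with representations are isomorphic iff there is a tree isomorphism between the
representing trees matching the multiplicities of all `ω`-branches. -/
theorem isomorphic_iff_tree_isomorphism
    (M₁ M₂ : SuitStruct) (R₁ : Repres M₁) (R₂ : Repres M₂) :
    (∃ e : M₁.carrier ≃ M₂.carrier, ∀ n x y, M₁.E n x y ↔ M₂.E n (e x) (e y)) ↔
    (∃ h : {l // l ∈ R₁.tree} ≃ {l // l ∈ R₂.tree},
      (∀ l : {l // l ∈ R₁.tree}, (h l : List Ordinal.{0}).length = (l : List Ordinal.{0}).length) ∧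
      (∀ l l' : {l // l ∈ R₁.tree},
        ((l : List Ordinal.{0}) <+: (l' : List Ordinal.{0})) ↔
          ((h l : List Ordinal.{0}) <+: (h l' : List Ordinal.{0}))) ∧
      ∀ (η : ℕ → Ordinal.{0}) (hη : ∀ n, take n η ∈ R₁.tree)
        (ν : ℕ → Ordinal.{0}) (hν : ∀ n, take n ν ∈ R₂.tree),
        (∀ n, (h ⟨take n η, hη n⟩ : List Ordinal.{0}) = take n ν) →
        branchMult R₁ η = branchMult R₂ ν) := by
  constructor
  · rintro ⟨e, he⟩
    exact forward_dir R₁ R₂ e he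
  · rintro ⟨h, hlen, hpre, hmult⟩
    exact backward_dir R₁ R₂ h hlen hpre hmult

end SuitableStructures
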